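/- Let g, s ∈ R^n with g ≠ 0 and s ≠ 0, H ∈ R^{2×2} symmetric with 0 < ĉ1 ≤ λ_min(H) ≤ λ_max(H) ≤ ĉ2, (α, β) = H⁻¹ (‖g‖², −gᵀs)ᵀ, and d = −α g + β s. Then ‖d‖ ≥ (1/ĉ2)‖g‖³ and ‖d‖ ≤ (1/ĉ1)(‖g‖ + ‖s‖)(‖g‖² + |gᵀs|). -/

import Mathlib

open Matrix

private lemma aux_CSH (a b c p q α β : ℝ) (hD : 0 ≤ a*c - b*b) :
    (a*p*α + b*(p*β + q*α) + c*q*β)^2 ≤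
      (a*p^2 + 2*b*p*q + c*q^2) * (a*α^2 + 2*b*α*β + c*β^2) := by
  nlinarith [mul_nonneg hD (sq_nonneg (p*β - q*α))]

private lemma aux_Spos (Qv S v2 : ℝ) (hQv : 0 < Qv) (hv : 0 < v2)
    (h1 : v2^2 ≤ Qv * S) : 0 < S := by nlinarith

private lemma aux_Slb (c₂ Qv S v2 : ℝ) (hQv : 0 < Qv) (hv : 0 < v2) (hS : 0 < S)
    (h1 : v2^2 ≤ Qv * S) (h2 : Qv ≤ c₂ * v2) : v2 ≤ c₂ * S := by
  nlinarith [mul_le_mul_of_nonneg_right h2 hS.le]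

private lemma aux_lb (c₂ S dd p : ℝ) (hc₂ : 0 < c₂) (hp : 0 < p)
    (hS2 : p^2 ≤ c₂ * S) (h3 : S^2 ≤ p * dd) : p^3 / c₂^2 ≤ dd := by
  have hS0 : 0 ≤ S := by nlinarith
  have h4 : p^2 * p^2 ≤ (c₂*S) * (c₂*S) :=
    mul_le_mul hS2 hS2 (by positivity) (by positivity)
  have h5 : c₂^2 * S^2 ≤ c₂^2 * (p * dd) := mul_le_mul_of_nonneg_left h3 (by positivity)
  have h6 : p * p^3 ≤ p * (c₂^2 * dd) := by nlinarith
  have h7 := le_of_mul_le_mul_left h6 hp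
  rw [div_le_iff₀ (by positivity)]; linarith

private lemma aux_hab (c₁ A v2 S : ℝ) (hc₁ : 0 < c₁) (hA : 0 ≤ A) (hv : 0 ≤ v2)
    (hlow : c₁ * A ≤ S) (hcs : S^2 ≤ A * v2) : c₁^2 * A ≤ v2 := by
  rcases eq_or_lt_of_le hA with h | h
  · rw [← h]; simpa using hv
  · have h0 : 0 ≤ c₁ * A := by positivity
    have h1 : (c₁*A)^2 ≤ S^2 := by nlinarith
    have h2 : (c₁*A)^2 ≤ A * v2 := le_trans h1 hcs
    nlinarith

private lemma aux_K (c₁ p q x y : ℝ) (hc₁ : 0 < c₁) (hp : 0 ≤ p)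
    (hab : c₁^2 * (x^2 + y^2) ≤ p^2 + q^2) : |x| ≤ (p + |q|) / c₁ := by
  have hK : 0 ≤ (p + |q|)/c₁ := by positivity
  apply abs_le_of_sq_le_sq _ hK
  rw [div_pow, le_div_iff₀ (by positivity)]
  nlinarith [sq_abs q, abs_nonneg q, mul_nonneg hp (abs_nonneg q), sq_nonneg y,
    mul_nonneg (mul_nonneg hc₁.le hc₁.le) (sq_nonneg y)]

private lemma aux_sq (x y r sp st : ℝ) (hsp : 0 ≤ sp) (hst : 0 ≤ st)
    (habsr : |r| ≤ sp * st) :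
    x^2*sp^2 - 2*(x*y)*r + y^2*st^2 ≤ (|x| * sp + |y| * st)^2 := by
  have h2 : -(x*y*r) ≤ |x| * |y| * |r| := by
    rw [← abs_mul, ← abs_mul]; exact neg_le_abs _
  have h3 : |x| * |y| * |r| ≤ |x| * |y| * (sp * st) :=
    mul_le_mul_of_nonneg_left habsr (by positivity)
  nlinarith [sq_abs x, sq_abs y]

set_option maxHeartbeats 1000000 in
theorem H_norm_bounds
    (n : ℕ) (g s : Fin n → ℝ) (hg : g ≠ 0) (hs : s ≠ 0)
    (c₁ c₂ : ℝ) (hc₁ : 0 < c₁) (hc : c₁ ≤ c₂)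
    (H : Matrix (Fin 2) (Fin 2) ℝ) (hHsymm : H.IsSymm)
    (hH : ∀ x : Fin 2 → ℝ, c₁ * (x ⬝ᵥ x) ≤ x ⬝ᵥ (H *ᵥ x) ∧ x ⬝ᵥ (H *ᵥ x) ≤ c₂ * (x ⬝ᵥ x))
    (α β : ℝ) (hαβ : ![α, β] = H⁻¹ *ᵥ ![g ⬝ᵥ g, -(g ⬝ᵥ s)])
    (d : Fin n → ℝ) (hd : d = (-α) • g + β • s) :
    (1/c₂) * Real.sqrt (g ⬝ᵥ g) ^ 3 ≤ Real.sqrt (d ⬝ᵥ d) ∧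
    Real.sqrt (d ⬝ᵥ d) ≤ (1/c₁) * (Real.sqrt (g ⬝ᵥ g) + Real.sqrt (s ⬝ᵥ s)) * (g ⬝ᵥ g + |g ⬝ᵥ s|) := by
  have hc₂ : 0 < c₂ := lt_of_lt_of_le hc₁ hc
  set a := H 0 0 with ha
  set b := H 0 1 with hb
  set c := H 1 1 with hcc
  have hba : H 1 0 = b := hHsymm.apply 0 1
  -- the quadratic form
  have key : ∀ u v : ℝ, c₁ * (u^2 + v^2) ≤ a*u^2 + 2*b*u*v + c*v^2 ∧
      a*u^2 + 2*b*u*v + c*v^2 ≤ c₂ * (u^2 + v^2) := by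
    intro u v
    have h := hH ![u, v]
    simp [dotProduct, Matrix.mulVec, Fin.sum_univ_two, hba] at h
    constructor <;> nlinarith [h.1, h.2]
  have ha1 : c₁ ≤ a := by have := (key 1 0).1; linarith only [this]
  have hc1 : c₁ ≤ c := by have := (key 0 1).1; linarith only [this]
  -- determinant positivity
  have hb2 : b^2 ≤ (a - c₁) * (c - c₁) := by
    have hquad : ∀ x : ℝ, 0 ≤ (a - c₁) * (x * x) + (2*b) * x + (c - c₁) := by
      intro x
      have h := (key x 1).1
      nlinarith [h]
    have h := discrim_le_zero hquad
    rw [discrim] at h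
    nlinarith [h]
  have hD : 0 < a*c - b*b := by
    have e1 : 0 ≤ c₁ * (a - c₁) := mul_nonneg hc₁.le (by linarith only [ha1])
    have e2 : c₁ * c₁ ≤ c₁ * c := mul_le_mul_of_nonneg_left hc1 hc₁.le
    have e3 : 0 < c₁ * c₁ := mul_pos hc₁ hc₁
    nlinarith [hb2, e1, e2, e3]
  have hdet : H.det = a*c - b*b := by rw [Matrix.det_fin_two, hba]
  have hdetne : H.det ≠ 0 := by rw [hdet]; exact hD.ne'
  -- explicit inverse
  have hinv : H⁻¹ = (a*c - b*b)⁻¹ • !![c, -b; -b, a] := by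
    rw [Matrix.inv_def, Matrix.adjugate_fin_two, Ring.inverse_eq_inv', hdet, hba]
  set p := g ⬝ᵥ g with hp
  set r := g ⬝ᵥ s with hr
  set t := s ⬝ᵥ s with ht
  set q : ℝ := -r with hq
  have hα : α = (a*c - b*b)⁻¹ * (c*p - b*q) := by
    have h0 := congrFun hαβ 0
    simp [hinv, Matrix.mulVec, dotProduct, Fin.sum_univ_two, Matrix.smul_apply] at h0
    rw [h0]; ring
  have hβ : β = (a*c - b*b)⁻¹ * (a*q - b*p) := by
    have h1 := congrFun hαβ 1
    simp [hinv, Matrix.mulVec, dotProduct, Fin.sum_univ_two, Matrix.smul_apply] at h1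
    rw [h1]; ring
  -- H (α, β) = (p, q)
  have hw1 : a*α + b*β = p := by
    rw [hα, hβ]; rw [show a * ((a*c - b*b)⁻¹ * (c*p - b*q)) + b * ((a*c - b*b)⁻¹ * (a*q - b*p)) = (a*c - b*b)⁻¹ * ((a*c - b*b) * p) by ring, inv_mul_cancel_left₀ hD.ne']
  have hw2 : b*α + c*β = q := by
    rw [hα, hβ]; rw [show b * ((a*c - b*b)⁻¹ * (c*p - b*q)) + c * ((a*c - b*b)⁻¹ * (a*q - b*p)) = (a*c - b*b)⁻¹ * ((a*c - b*b) * q) by ring, inv_mul_cancel_left₀ hD.ne']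
  -- basic positivity
  have hp0 : 0 < p := by
    rcases lt_or_eq_of_le (by
      have : (0:ℝ) ≤ ∑ i, g i * g i := Finset.sum_nonneg fun i _ => mul_self_nonneg _
      simpa [hp, dotProduct] using this) with h | h
    · exact h
    · exact absurd (dotProduct_self_eq_zero.mp h.symm) hg
  have ht0 : 0 ≤ t := by
    have : (0:ℝ) ≤ ∑ i, s i * s i := Finset.sum_nonneg fun i _ => mul_self_nonneg _
    simpa [ht, dotProduct] using this
  have hv0 : 0 < p^2 + q^2 := by positivity
  -- Cauchy–Schwarz facts
  have hCSgd : (g ⬝ᵥ d)^2 ≤ p * (d ⬝ᵥ d) := by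
    have h := Finset.sum_mul_sq_le_sq_mul_sq Finset.univ g d
    simpa [hp, dotProduct, sq] using h
  have hCSgs : r^2 ≤ p * t := by
    have h := Finset.sum_mul_sq_le_sq_mul_sq Finset.univ g s
    simpa [hp, hr, ht, dotProduct, sq] using h
  -- Q(w) = S, B(v,w) = p² + q²
  have hQw : a*α^2 + 2*b*α*β + c*β^2 = α*p + β*q := by linear_combination α*hw1 + β*hw2
  have hBvw : a*p*α + b*(p*β + q*α) + c*q*β = p^2 + q^2 := by linear_combination p*hw1 + q*hw2
  have h1 : (p^2 + q^2)^2 ≤ (a*p^2 + 2*b*p*q + c*q^2) * (α*p + β*q) := by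
    rw [← hQw, ← hBvw]
    exact aux_CSH a b c p q α β hD.le
  have hQv_pos : 0 < a*p^2 + 2*b*p*q + c*q^2 :=
    lt_of_lt_of_le (by positivity) (key p q).1
  have hQv_le : a*p^2 + 2*b*p*q + c*q^2 ≤ c₂ * (p^2 + q^2) := (key p q).2
  have hSpos : 0 < α*p + β*q := aux_Spos _ _ _ hQv_pos hv0 h1
  have hSlb : p^2 + q^2 ≤ c₂ * (α*p + β*q) := aux_Slb _ _ _ _ hQv_pos hv0 hSpos h1 hQv_le
  -- dot products with d
  have hgd : g ⬝ᵥ d = -(α*p + β*q) := by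
    rw [hd]
    simp only [dotProduct_add, dotProduct_smul, smul_eq_mul, ← hp, ← hr]
    rw [hq]; ring
  have hdd : d ⬝ᵥ d = α^2*p - 2*(α*β)*r + β^2*t := by
    rw [hd]
    simp only [dotProduct_add, add_dotProduct, dotProduct_smul, smul_dotProduct,
      smul_eq_mul, dotProduct_comm s g, ← hp, ← hr, ← ht]
    ring
  constructor
  · -- lower bound
    have hS2 : p^2 ≤ c₂ * (α*p + β*q) := by
      have := sq_nonneg q; linarith only [hSlb, this]
    have h3 : (α*p + β*q)^2 ≤ p * (d ⬝ᵥ d) := by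
      have h := hCSgd; rw [hgd, neg_sq] at h; exact h
    have hdd_lb : p^3 / c₂^2 ≤ d ⬝ᵥ d := aux_lb c₂ _ _ p hc₂ hp0 hS2 h3
    have hsq : ((1/c₂) * Real.sqrt p ^ 3)^2 = p^3 / c₂^2 := by
      have e : Real.sqrt p ^ 2 = p := Real.sq_sqrt hp0.le
      calc ((1/c₂) * Real.sqrt p ^ 3)^2 = (1/c₂)^2 * (Real.sqrt p ^ 2)^3 := by ring
        _ = p^3 / c₂^2 := by rw [e]; ring
    refine Real.le_sqrt_of_sq_le ?_
    rw [hsq]; exact hdd_lb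
  · -- upper bound
    have habsr : |r| ≤ Real.sqrt p * Real.sqrt t := by
      have h := Real.sqrt_le_sqrt hCSgs
      rwa [Real.sqrt_sq_eq_abs, Real.sqrt_mul hp0.le] at h
    -- bound on α, β
    have hab : c₁^2 * (α^2 + β^2) ≤ p^2 + q^2 := by
      refine aux_hab c₁ _ _ (α*p + β*q) hc₁ (by positivity) hv0.le ?_ ?_
      · rw [← hQw]; exact (key α β).1
      · nlinarith [sq_nonneg (α*q - β*p)]
    have hαK : |α| ≤ (p + |q|) / c₁ := aux_K c₁ p q α β hc₁ hp0.le hab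
    have hβK : |β| ≤ (p + |q|) / c₁ := by
      refine aux_K c₁ p q β α hc₁ hp0.le ?_
      linarith only [hab]
    have hstep : Real.sqrt (d ⬝ᵥ d) ≤ |α| * Real.sqrt p + |β| * Real.sqrt t := by
      have hrhs : 0 ≤ |α| * Real.sqrt p + |β| * Real.sqrt t := by positivity
      have hsqle : d ⬝ᵥ d ≤ (|α| * Real.sqrt p + |β| * Real.sqrt t)^2 := by
        have e1 : Real.sqrt p ^ 2 = p := Real.sq_sqrt hp0.le
        have e2 : Real.sqrt t ^ 2 = t := Real.sq_sqrt ht0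
        have h := aux_sq α β r (Real.sqrt p) (Real.sqrt t)
          (Real.sqrt_nonneg p) (Real.sqrt_nonneg t) habsr
        rw [e1, e2] at h
        rw [hdd]; exact h
      calc Real.sqrt (d ⬝ᵥ d) ≤ Real.sqrt ((|α| * Real.sqrt p + |β| * Real.sqrt t)^2) :=
            Real.sqrt_le_sqrt hsqle
        _ = |α| * Real.sqrt p + |β| * Real.sqrt t := Real.sqrt_sq hrhs
    have hqr : |q| = |r| := by rw [hq, abs_neg]
    calc Real.sqrt (d ⬝ᵥ d) ≤ |α| * Real.sqrt p + |β| * Real.sqrt t := hstep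
      _ ≤ ((p + |q|)/c₁) * Real.sqrt p + ((p + |q|)/c₁) * Real.sqrt t :=
          add_le_add (mul_le_mul_of_nonneg_right hαK (Real.sqrt_nonneg _))
            (mul_le_mul_of_nonneg_right hβK (Real.sqrt_nonneg _))
      _ = (1/c₁) * (Real.sqrt p + Real.sqrt t) * (p + |r|) := by
          rw [← hqr]; field_simp
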